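/- Let s, t ∈ {0,1}^L be distinct words of the same length L ≥ 1, and suppose there exist a word v with |v| ≤ L and an integer d with 0 ≤ d ≤ 2L − |v| such that for each pair (p,q) ∈ {s,t}×{s,t}, the word v occurs as a subword of pq exactly once, namely starting at position d. Let Y ⊆ {0,1}^ℤ be the set of all z that admit a decomposition as a bi-infinite concatenation of s and t. Then Y is a subshift, and for every positive integer n that is a multiple of 2L, the complexity satisfies L·2^{n/L} ≤ P_Y(n) ≤ 4L·2^{n/L}. -/

import Mathlib

open MeasureTheory Filter
open scoped ENNReal

/-- The left shift on bi-infinite binary sequences. -/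
def shift (x : ℤ → Bool) : ℤ → Bool := fun n => x (n + 1)

/-- A subshift: a nonempty closed shift-invariant subset of `{0,1}^ℤ`. -/
def IsSubshift (X : Set (ℤ → Bool)) : Prop :=
  X.Nonempty ∧ IsClosed X ∧ shift '' X = X

/-- The one-sided cylinder set `[w]₀⁺` in `X` determined by a word `w`. -/
def cylinder (X : Set (ℤ → Bool)) (w : List Bool) : Set (ℤ → Bool) :=
  {x ∈ X | ∀ j : Fin w.length, x ((j : ℕ) : ℤ) = w.get j}

/-- The language of words of length `n`. -/
def lang (X : Set (ℤ → Bool)) (n : ℕ) : Set (List Bool) :=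
  {w | w.length = n ∧ (cylinder X w).Nonempty}

/-- The word complexity function. -/
noncomputable def complexity (X : Set (ℤ → Bool)) (n : ℕ) : ℕ :=
  (lang X n).ncard

/-- The two-sided orbit of a point under the shift. -/
def orbit (x : ℤ → Bool) : Set (ℤ → Bool) := {y | ∃ k : ℤ, y = fun n => x (n + k)}

/-- A minimal subshift: every orbit is dense. -/
def IsMinimalSubshift (X : Set (ℤ → Bool)) : Prop :=
  IsSubshift X ∧ ∀ x ∈ X, X ⊆ closure (orbit x)

/-- A shift-invariant Borel probability measure supported on `X`. -/
def InvariantProbOn (X : Set (ℤ → Bool)) (μ : Measure (ℤ → Bool)) : Prop :=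
  IsProbabilityMeasure μ ∧ μ Xᶜ = 0 ∧ Measure.map shift μ = μ

/-- Unique ergodicity of a subshift. -/
def UniquelyErgodic (X : Set (ℤ → Bool)) : Prop :=
  ∃! μ : Measure (ℤ → Bool), InvariantProbOn X μ

/-- `v` occurs as a subword of `u` starting at position `i`. -/
def occursAt (v u : List Bool) (i : ℕ) : Prop :=
  i + v.length ≤ u.length ∧ (u.drop i).take v.length = v

/-- `(c, β)` is a decomposition of `z ∈ {0,1}^ℤ` as a bi-infinite concatenation of the
words `s` and `t`, each of length `L`: `0 ≤ c < L`, each `β n ∈ {s,t}`, and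
`z (c + nL + r) = (β n) r` for all `n ∈ ℤ`, `0 ≤ r < L`. -/
def IsDecomp (s t : List Bool) (L : ℕ) (z : ℤ → Bool) (c : ℤ) (β : ℤ → List Bool) :
    Prop :=
  0 ≤ c ∧ c < (L : ℤ) ∧ (∀ n : ℤ, β n = s ∨ β n = t) ∧
    ∀ (n : ℤ) (r : ℕ), r < L → z (c + n * L + r) = (β n).getD r false

-- pointwise characterization of occursAt
lemma occursAt_iff (v u : List Bool) (i : ℕ) :
    occursAt v u i ↔ i + v.length ≤ u.length ∧
      ∀ j, j < v.length → u.getD (i + j) false = v.getD j false := by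
  constructor
  · rintro ⟨h1, h2⟩
    refine ⟨h1, fun j hj => ?_⟩
    have hiu : i + j < u.length := by omega
    have hdl : j < (u.drop i).length := by simp [List.length_drop]; omega
    have hjl : j < ((u.drop i).take v.length).length := by
      simp [List.length_take, List.length_drop]; omega
    have key : ((u.drop i).take v.length).getD j false = u.getD (i + j) false := by
      rw [List.getD_eq_getElem _ _ hjl, List.getElem_take, List.getElem_drop,
        List.getD_eq_getElem u false hiu]
    rw [← key, h2]
  · rintro ⟨h1, h2⟩
    refine ⟨h1, ?_⟩
    apply List.ext_getElem
    · simp [List.length_take, List.length_drop]; omega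
    · intro j hj hj2
      rw [List.getElem_take, List.getElem_drop]
      have hiu : i + j < u.length := by omega
      have := h2 j hj2
      rw [List.getD_eq_getElem u false hiu, List.getD_eq_getElem v false hj2] at this
      exact this

section Main
variable (s t : List Bool) (L : ℕ)

/-- bi-infinite concatenation determined by offset `c` and block choice `g`. -/
def Zfun (c : ℤ) (g : ℤ → Bool) : ℤ → Bool :=
  fun i => (if g ((i - c) / (L : ℤ)) then s else t).getD ((i - c) % (L : ℤ)).toNat false

variable {s t L}
variable (hL : 1 ≤ L) (hs : s.length = L) (ht : t.length = L)

lemma ediv_emod_pt (c k : ℤ) (r : ℕ) (hr : r < L) :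
    (c + k * L + r - c) / (L : ℤ) = k ∧ ((c + k * L + r - c) % (L : ℤ)).toNat = r := by
  have hL0 : (L : ℤ) ≠ 0 := by omega
  have he : c + k * (L : ℤ) + r - c = (r : ℤ) + k * L := by ring
  constructor
  · rw [he, Int.add_mul_ediv_right _ _ hL0, Int.ediv_eq_zero_of_lt (by positivity) (by exact_mod_cast hr)]
    ring
  · rw [he, Int.add_mul_emod_self_right, Int.emod_eq_of_lt (by positivity) (by exact_mod_cast hr)]
    simp

lemma Zfun_isDecomp (c : ℤ) (hc0 : 0 ≤ c) (hc1 : c < L) (g : ℤ → Bool) :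
    IsDecomp s t L (Zfun s t L c g) c (fun k => if g k then s else t) := by
  refine ⟨hc0, hc1, fun k => by by_cases h : g k <;> simp [h], fun k r hr => ?_⟩
  unfold Zfun
  rw [(ediv_emod_pt c k r hr).1, (ediv_emod_pt c k r hr).2]

lemma IsDecomp.eq_Zfun {z c β} (h : IsDecomp s t L z c β) :
    z = Zfun s t L c (fun k => decide (β k = s)) := by
  obtain ⟨hc0, hc1, hβ, hz⟩ := h
  have hL0 : (0:ℤ) < (L : ℤ) := by omega
  funext i
  set k := (i - c) / (L : ℤ) with hk
  set e := (i - c) % (L : ℤ) with he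
  have he0 : 0 ≤ e := Int.emod_nonneg _ (by omega)
  have heL : e < L := Int.emod_lt_of_pos _ hL0
  have hieq : i = c + k * L + (e.toNat : ℤ) := by
    have h1 : (i - c) = (L:ℤ) * k + e := (Int.mul_ediv_add_emod _ _).symm
    have hmul : (L:ℤ) * k = k * (L:ℤ) := mul_comm _ _
    omega
  have hzi := hz k e.toNat (by omega)
  rw [← hieq] at hzi
  rw [hzi]
  unfold Zfun
  rcases hβ k with h | h
  · simp [Zfun, h, ← hk, ← he]
  · simp only [Zfun, h, ← hk, ← he]
    by_cases hts : t = s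
    · simp [hts]
    · simp [hts]

end Main
section Subshift
variable {s t : List Bool} {L : ℕ}

lemma Zfun_continuous (c : ℤ) : Continuous (Zfun s t L c) := by
  apply continuous_pi; intro i
  show Continuous fun g : ℤ → Bool =>
    (if g ((i - c) / (L : ℤ)) then s else t).getD ((i - c) % (L : ℤ)).toNat false
  exact (continuous_of_discreteTopology
    (f := fun b : Bool => (if b then s else t).getD ((i - c) % (L : ℤ)).toNat false)).comp
    (continuous_apply ((i - c) / (L : ℤ)))

lemma Y_eq : {z | ∃ c β, IsDecomp s t L z c β}
    = ⋃ c ∈ Finset.range L, Set.range (Zfun s t L (c : ℤ)) := by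
  ext z
  simp only [Set.mem_setOf_eq, Set.mem_iUnion, Set.mem_range, Finset.mem_range]
  constructor
  · rintro ⟨c, β, h⟩
    have hc0 := h.1
    have hc1 := h.2.1
    refine ⟨c.toNat, by omega, fun k => decide (β k = s), ?_⟩
    have hcc : ((c.toNat : ℕ) : ℤ) = c := by omega
    rw [hcc]
    exact h.eq_Zfun.symm
  · rintro ⟨c, hc, g, rfl⟩
    exact ⟨c, _, Zfun_isDecomp (c : ℤ) (by positivity) (by exact_mod_cast hc) g⟩

lemma Y_closed : IsClosed {z | ∃ c β, IsDecomp s t L z c β} := by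
  rw [Y_eq]
  apply Set.Finite.isClosed_biUnion ((Finset.range L).finite_toSet)
  intro c _
  exact (isCompact_range (Zfun_continuous (c : ℤ))).isClosed

lemma Y_nonempty (hL : 1 ≤ L) : Set.Nonempty {z | ∃ c β, IsDecomp s t L z c β} :=
  ⟨Zfun s t L 0 (fun _ => true), 0, _,
    Zfun_isDecomp 0 le_rfl (by exact_mod_cast hL) (fun _ => true)⟩

lemma shift_mem (hL : 1 ≤ L) {z : ℤ → Bool} (hz : z ∈ {z | ∃ c β, IsDecomp s t L z c β}) :
    shift z ∈ {z | ∃ c β, IsDecomp s t L z c β} := by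
  obtain ⟨c, β, hc0, hc1, hβ, hzd⟩ := hz
  by_cases h : c = 0
  · refine ⟨(L : ℤ) - 1, fun n => β (n + 1), by omega, by omega, fun n => hβ _, ?_⟩
    intro n r hr
    show z ((L : ℤ) - 1 + n * L + r + 1) = _
    have he : (L : ℤ) - 1 + n * L + r + 1 = c + (n + 1) * L + r := by rw [h]; ring
    rw [he]; exact hzd (n + 1) r hr
  · refine ⟨c - 1, β, by omega, by omega, hβ, ?_⟩
    intro n r hr
    show z (c - 1 + n * L + r + 1) = _
    have he : c - 1 + n * (L : ℤ) + r + 1 = c + n * L + r := by ring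
    rw [he]; exact hzd n r hr

lemma unshift_mem {z : ℤ → Bool} (hz : z ∈ {z | ∃ c β, IsDecomp s t L z c β}) :
    ∃ y ∈ {z | ∃ c β, IsDecomp s t L z c β}, shift y = z := by
  obtain ⟨c, β, hc0, hc1, hβ, hzd⟩ := hz
  refine ⟨fun i => z (i - 1), ?_, ?_⟩
  · by_cases h : c + 1 < L
    · refine ⟨c + 1, β, by omega, by omega, hβ, ?_⟩
      intro n r hr
      show z (c + 1 + n * L + r - 1) = _
      have he : c + 1 + n * (L : ℤ) + r - 1 = c + n * L + r := by ring
      rw [he]; exact hzd n r hr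
    · refine ⟨0, fun n => β (n - 1), by omega, by omega, fun n => hβ _, ?_⟩
      intro n r hr
      show z (0 + n * L + r - 1) = _
      have hc : c = (L : ℤ) - 1 := by omega
      have he : (0 : ℤ) + n * L + r - 1 = c + (n - 1) * L + r := by rw [hc]; ring
      rw [he]; exact hzd (n - 1) r hr
  · funext i
    show z (i + 1 - 1) = z i
    norm_num

lemma Y_subshift (hL : 1 ≤ L) : IsSubshift {z | ∃ c β, IsDecomp s t L z c β} := by
  refine ⟨Y_nonempty hL, Y_closed, Set.Subset.antisymm ?_ ?_⟩
  · rintro _ ⟨y, hy, rfl⟩; exact shift_mem hL hy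
  · intro z hz
    obtain ⟨y, hy, h⟩ := unshift_mem hz
    exact ⟨y, hy, h⟩

end Subshift
section Occ
variable {s t v : List Bool} {L d : ℕ}

/-- `v` matches `z` at integer position `p`. -/
def MatchesV (v : List Bool) (z : ℤ → Bool) (p : ℤ) : Prop :=
  ∀ j : ℕ, j < v.length → z (p + j) = v.getD j false

lemma pair_getD (hs : s.length = L) (ht : t.length = L)
    {z c β} (h : IsDecomp s t L z c β) (k : ℤ) (j : ℕ) (hj : j < 2 * L) :
    z (c + k * L + j) = (β k ++ β (k + 1)).getD j false := by
  obtain ⟨hc0, hc1, hβ, hz⟩ := h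
  have hlk : (β k).length = L := by rcases hβ k with h | h <;> rw [h] <;> assumption
  by_cases hjL : j < L
  · rw [List.getD_append _ _ _ _ (by omega)]
    exact hz k j hjL
  · have h1 : c + k * (L : ℤ) + j = c + (k + 1) * L + ((j - L : ℕ) : ℤ) := by
      push_cast [Nat.cast_sub (by omega : L ≤ j)]; ring
    rw [h1, hz (k + 1) (j - L) (by omega),
      List.getD_append_right _ _ _ _ (by omega), hlk]

lemma decomp_matches (hs : s.length = L) (ht : t.length = L)
    (hv : v.length ≤ L) (hd : d + v.length ≤ 2 * L)
    (hocc : ∀ p q : List Bool, (p = s ∨ p = t) → (q = s ∨ q = t) →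
      occursAt v (p ++ q) d ∧ ∀ i : ℕ, occursAt v (p ++ q) i → i = d)
    {z c β} (h : IsDecomp s t L z c β) (k : ℤ) :
    MatchesV v z (c + k * L + d) := by
  intro j hj
  have ho := (hocc (β k) (β (k + 1)) (h.2.2.1 k) (h.2.2.1 (k + 1))).1
  rw [occursAt_iff] at ho
  have hpt := ho.2 j hj
  have h1 : c + k * (L : ℤ) + d + j = c + k * L + ((d + j : ℕ) : ℤ) := by push_cast; ring
  rw [h1, pair_getD hs ht h k (d + j) (by omega), hpt]

lemma matches_pos (hs : s.length = L) (ht : t.length = L)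
    (hv : v.length ≤ L) (hd : d + v.length ≤ 2 * L)
    (hocc : ∀ p q : List Bool, (p = s ∨ p = t) → (q = s ∨ q = t) →
      occursAt v (p ++ q) d ∧ ∀ i : ℕ, occursAt v (p ++ q) i → i = d)
    {z c β} (h : IsDecomp s t L z c β) {p : ℤ} (hm : MatchesV v z p) :
    ∃ k : ℤ, p = c + k * L + d := by
  have hL : 1 ≤ L := by
    have hc0 := h.1
    have hc1 := h.2.1
    omega
  have hL0 : (0 : ℤ) < (L : ℤ) := by exact_mod_cast hL
  set k := (p - c) / (L : ℤ) with hk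
  set e := (p - c) % (L : ℤ) with he
  have he0 : 0 ≤ e := Int.emod_nonneg _ (by omega)
  have heL : e < L := Int.emod_lt_of_pos _ hL0
  have hpe : p = c + k * L + e := by
    have h1 : (p - c) = (L : ℤ) * k + e := (Int.mul_ediv_add_emod _ _).symm
    have hmul : (L : ℤ) * k = k * (L : ℤ) := mul_comm _ _
    omega
  have hβk := h.2.2.1 k
  have hβk1 := h.2.2.1 (k + 1)
  have hlen : (β k ++ β (k + 1)).length = 2 * L := by
    rcases hβk with h1 | h1 <;> rcases hβk1 with h2 | h2 <;>
      simp [h1, h2, hs, ht] <;> omega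
  have hoc : occursAt v (β k ++ β (k + 1)) e.toNat := by
    rw [occursAt_iff]
    constructor
    · omega
    · intro j hj
      have h1 : ((e.toNat + j : ℕ) : ℤ) = e + j := by omega
      have h2 : c + k * (L : ℤ) + (e + (j : ℤ)) = p + j := by omega
      rw [← pair_getD hs ht h k (e.toNat + j) (by omega)]
      rw [h1, h2]
      exact hm j hj
  have := (hocc (β k) (β (k + 1)) hβk hβk1).2 e.toNat hoc
  exact ⟨k, by omega⟩

lemma offset_eq (hs : s.length = L) (ht : t.length = L)
    (hv : v.length ≤ L) (hd : d + v.length ≤ 2 * L)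
    (hocc : ∀ p q : List Bool, (p = s ∨ p = t) → (q = s ∨ q = t) →
      occursAt v (p ++ q) d ∧ ∀ i : ℕ, occursAt v (p ++ q) i → i = d)
    {z c β z' c' β'} (h : IsDecomp s t L z c β) (h' : IsDecomp s t L z' c' β')
    (hagree : ∀ i : ℤ, 0 ≤ i → i < 2 * L → z i = z' i) : c = c' := by
  have hc0 := h.1
  have hc1 := h.2.1
  have hc0' := h'.1
  have hc1' := h'.2.1
  set p : ℤ := if c + d < L then c + d else c + d - L with hp
  have hk0 : ∃ k : ℤ, p = c + k * L + d := by
    by_cases hcd : c + d < (L : ℤ)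
    · refine ⟨0, ?_⟩; rw [hp, if_pos hcd]; ring
    · refine ⟨-1, ?_⟩; rw [hp, if_neg hcd]; ring
  have hmz : MatchesV v z p := by
    obtain ⟨k, hk⟩ := hk0
    rw [hk]
    exact decomp_matches hs ht hv hd hocc h k
  have hp0 : 0 ≤ p := by omega
  have hp2 : p + (v.length : ℤ) ≤ 2 * L := by omega
  have hmz' : MatchesV v z' p := by
    intro j hj
    rw [← hagree (p + j) (by omega) (by omega)]
    exact hmz j hj
  obtain ⟨k, hk⟩ := hk0
  obtain ⟨k', hk'⟩ := matches_pos hs ht hv hd hocc h' hmz'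
  by_contra hne
  have hdvd : (L : ℤ) ∣ (c - c') := ⟨k' - k, by linarith [hk, hk', mul_sub (L:ℤ) k' k]⟩
  have h2 := Int.le_of_dvd (abs_pos.mpr (sub_ne_zero.mpr hne)) ((dvd_abs _ _).mpr hdvd)
  have h3 : |c - c'| < L := abs_sub_lt_iff.mpr ⟨by omega, by omega⟩
  linarith

end Occ
section Count

lemma ediv_range {a b m : ℤ} (hb : 0 < b) (hlo : -b ≤ a) (hhi : a < m * b) :
    -1 ≤ a / b ∧ a / b < m := by
  have h1 : a = b * (a / b) + a % b := (Int.mul_ediv_add_emod _ _).symm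
  have h2 : 0 ≤ a % b := Int.emod_nonneg _ (by omega)
  have h3 : a % b < b := Int.emod_lt_of_pos _ hb
  constructor
  · by_contra hlt
    push_neg at hlt
    have h4 : b * (a / b) ≤ b * (-2) :=
      mul_le_mul_of_nonneg_left (by omega) hb.le
    omega
  · by_contra hge
    push_neg at hge
    have h4 : b * m ≤ b * (a / b) := mul_le_mul_of_nonneg_left hge hb.le
    have h5 : b * m = m * b := mul_comm _ _
    omega

lemma ofFn_mem_lang {Y : Set (ℤ → Bool)} {z : ℤ → Bool} (hz : z ∈ Y) (n : ℕ) :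
    (List.ofFn fun i : Fin n => z ((i : ℕ) : ℤ)) ∈ lang Y n := by
  refine ⟨List.length_ofFn, z, hz, fun j => ?_⟩
  rw [List.get_ofFn]
  simp

lemma ofFn_eq_imp {n : ℕ} {z z' : ℤ → Bool}
    (h : (List.ofFn fun i : Fin n => z ((i : ℕ) : ℤ))
      = List.ofFn fun i : Fin n => z' ((i : ℕ) : ℤ)) :
    ∀ i : ℤ, 0 ≤ i → i < n → z i = z' i := by
  intro i h0 h1
  have h2 : i.toNat < n := by omega
  have h3 := congrArg (fun l => l.getD i.toNat false) h
  have hlz : i.toNat < (List.ofFn fun i : Fin n => z ((i : ℕ) : ℤ)).length := by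
    rw [List.length_ofFn]; exact h2
  have hlz' : i.toNat < (List.ofFn fun i : Fin n => z' ((i : ℕ) : ℤ)).length := by
    rw [List.length_ofFn]; exact h2
  rw [List.getD_eq_getElem _ false hlz, List.getD_eq_getElem _ false hlz',
    List.getElem_ofFn, List.getElem_ofFn] at h3
  have h4 : ((i.toNat : ℕ) : ℤ) = i := by omega
  simpa [h4] using h3

lemma neq_index {s t : List Bool} {L : ℕ} (hs : s.length = L) (ht : t.length = L)
    (hst : s ≠ t) : ∃ j0 < L, s.getD j0 false ≠ t.getD j0 false := by
  by_contra hc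
  push_neg at hc
  apply hst
  apply List.ext_getElem (by omega)
  intro j hj1 hj2
  have := hc j (by omega)
  rwa [List.getD_eq_getElem _ _ hj1, List.getD_eq_getElem _ _ hj2] at this

lemma Zfun_eq_on {s t : List Bool} {L : ℕ} (hL : 1 ≤ L) (c : ℤ) (hc0 : 0 ≤ c)
    (hc1 : c < L) (g g' : ℤ → Bool) {n M : ℕ} (hn : n = M * L)
    (hagree : ∀ k : ℤ, -1 ≤ k → k < M → g k = g' k) :
    ∀ i : ℤ, 0 ≤ i → i < n → Zfun s t L c g i = Zfun s t L c g' i := by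
  intro i h0 h1
  have hb : (0 : ℤ) < L := by exact_mod_cast hL
  have hnM : (n : ℤ) = (M : ℤ) * L := by push_cast [hn]; ring
  have hk := ediv_range (a := i - c) (b := (L : ℤ)) (m := (M : ℤ)) hb (by omega) (by omega)
  unfold Zfun
  rw [hagree _ hk.1 hk.2]

end Count
section Upper
variable {s t : List Bool} {L : ℕ}

lemma lang_subset_upper (hL : 1 ≤ L) {n M : ℕ} (hn : n = M * L) :
    lang {z | ∃ c β, IsDecomp s t L z c β} n ⊆
      ↑(Finset.image (fun p : Fin L × (Fin (M + 1) → Bool) =>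
          List.ofFn fun i : Fin n =>
            Zfun s t L ((p.1 : ℕ) : ℤ)
              (fun k => if h : 0 ≤ k + 1 ∧ (k + 1).toNat < M + 1 then
                p.2 ⟨(k + 1).toNat, h.2⟩ else false)
              ((i : ℕ) : ℤ)) Finset.univ) := by
  intro w hw
  obtain ⟨hwlen, x, hxY, hxw⟩ := hw
  obtain ⟨c, β, hdec⟩ := hxY
  have hc0 := hdec.1
  have hc1 := hdec.2.1
  have hxz := hdec.eq_Zfun
  set g : ℤ → Bool := fun k => decide (β k = s) with hg
  refine Finset.mem_coe.mpr (Finset.mem_image.mpr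
    ⟨(⟨c.toNat, by omega⟩, fun j => g (((j : ℕ) : ℤ) - 1)), Finset.mem_univ _, ?_⟩)
  apply List.ext_getElem (by rw [List.length_ofFn, hwlen])
  intro i hi1 hi2
  rw [List.getElem_ofFn]
  have hcc : ((c.toNat : ℕ) : ℤ) = c := by omega
  have hin : i < n := by rwa [List.length_ofFn] at hi1
  have hxi : x ((i : ℕ) : ℤ) = w[i] := by
    have := hxw ⟨i, hi2⟩
    rwa [List.get_eq_getElem] at this
  have hzz : Zfun s t L c g ((i : ℕ) : ℤ) = Zfun s t L ((c.toNat : ℕ) : ℤ) g ((i : ℕ) : ℤ) := by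
    rw [hcc]
  rw [← hxi, hxz, hzz]
  show Zfun s t L ((c.toNat : ℕ) : ℤ) _ ((i : ℕ) : ℤ)
    = Zfun s t L ((c.toNat : ℕ) : ℤ) g ((i : ℕ) : ℤ)
  apply Zfun_eq_on hL _ (by positivity) (by omega) _ g hn ?_ ((i : ℕ) : ℤ) (by positivity)
    (by exact_mod_cast hin)
  intro k hk1 hk2
  have hcond : 0 ≤ k + 1 ∧ (k + 1).toNat < M + 1 := by omega
  rw [dif_pos hcond]
  show g (((k + 1).toNat : ℤ) - 1) = g k
  congr 1
  omega

lemma complexity_upper (hL : 1 ≤ L) {n M : ℕ} (hn : n = M * L) :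
    complexity {z | ∃ c β, IsDecomp s t L z c β} n ≤ L * 2 ^ (M + 1) := by
  classical
  have h1 : complexity {z | ∃ c β, IsDecomp s t L z c β} n ≤
      (Finset.image (fun p : Fin L × (Fin (M + 1) → Bool) =>
          List.ofFn fun i : Fin n =>
            Zfun s t L ((p.1 : ℕ) : ℤ)
              (fun k => if h : 0 ≤ k + 1 ∧ (k + 1).toNat < M + 1 then
                p.2 ⟨(k + 1).toNat, h.2⟩ else false)
              ((i : ℕ) : ℤ)) Finset.univ).card := by
    rw [complexity, ← Set.ncard_coe_finset]
    exact Set.ncard_le_ncard (lang_subset_upper hL hn) (Finset.finite_toSet _)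
  refine h1.trans ((Finset.card_image_le).trans ?_)
  rw [Finset.card_univ]
  simp [Fintype.card_fun]

end Upper
section Lower
variable {s t : List Bool} {L : ℕ}

/-- block-choice function for the lower-bound injection -/
def gLow (L j0 M : ℕ) (c : Fin L) (b : Fin M → Bool) : ℤ → Bool := fun k =>
  if 0 < (c : ℕ) ∧ L - (c : ℕ) ≤ j0 then
    (if h : 0 ≤ k + 1 ∧ (k + 1).toNat < M then b ⟨(k + 1).toNat, h.2⟩ else true)
  else
    (if h : 0 ≤ k ∧ k.toNat < M then b ⟨k.toNat, h.2⟩ else true)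

def Phi (s t : List Bool) (L j0 M n : ℕ) (p : Fin L × (Fin M → Bool)) : List Bool :=
  List.ofFn fun i : Fin n =>
    Zfun s t L ((p.1 : ℕ) : ℤ) (gLow L j0 M p.1 p.2) ((i : ℕ) : ℤ)

lemma gLow_eval {j0 M : ℕ} (c : Fin L) (b : Fin M → Bool) (j : Fin M)
    {K : ℤ} (hK : K = if 0 < (c : ℕ) ∧ L - (c : ℕ) ≤ j0 then ((j : ℕ) : ℤ) - 1
      else ((j : ℕ) : ℤ)) :
    gLow L j0 M c b K = b j := by
  unfold gLow
  by_cases hcase : 0 < (c : ℕ) ∧ L - (c : ℕ) ≤ j0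
  · rw [if_pos hcase] at hK ⊢
    have hjM := j.isLt
    have hc : 0 ≤ K + 1 ∧ (K + 1).toNat < M := by omega
    rw [dif_pos hc]
    congr 1
    apply Fin.ext
    show (K + 1).toNat = (j : ℕ)
    omega
  · rw [if_neg hcase] at hK ⊢
    have hjM := j.isLt
    have hc : 0 ≤ K ∧ K.toNat < M := by omega
    rw [dif_pos hc]
    congr 1
    apply Fin.ext
    show K.toNat = (j : ℕ)
    omega

lemma Phi_inj (hL : 1 ≤ L) (hs : s.length = L) (ht : t.length = L)
    {v : List Bool} {d : ℕ} (hv : v.length ≤ L) (hd : d + v.length ≤ 2 * L)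
    (hocc : ∀ p q : List Bool, (p = s ∨ p = t) → (q = s ∨ q = t) →
      occursAt v (p ++ q) d ∧ ∀ i : ℕ, occursAt v (p ++ q) i → i = d)
    {j0 : ℕ} (hj0L : j0 < L) (hj0 : s.getD j0 false ≠ t.getD j0 false)
    {n M : ℕ} (hM : 2 ≤ M) (hn : n = M * L) :
    Function.Injective (Phi s t L j0 M n) := by
  rintro ⟨c, b⟩ ⟨c', b'⟩ heq
  have hcL := c.isLt
  have hcL' := c'.isLt
  have hzdec := Zfun_isDecomp (s := s) (t := t) (((c : ℕ) : ℤ))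
    (by positivity) (by exact_mod_cast hcL) (gLow L j0 M c b)
  have hzdec' := Zfun_isDecomp (s := s) (t := t) (((c' : ℕ) : ℤ))
    (by positivity) (by exact_mod_cast hcL') (gLow L j0 M c' b')
  have hag := ofFn_eq_imp (n := n) heq
  have h2L : 2 * L ≤ n := by
    rw [hn]; exact Nat.mul_le_mul_right L hM
  have hcc : (((c : ℕ) : ℕ) : ℤ) = (((c' : ℕ) : ℕ) : ℤ) :=
    offset_eq hs ht hv hd hocc hzdec hzdec'
      (fun i h0 h1 => hag i h0 (by omega))
  have hceq : c = c' := Fin.ext (by exact_mod_cast hcc)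
  subst hceq
  suffices hb : b = b' by rw [hb]
  funext j
  by_contra hne
  have hjM := j.isLt
  set K : ℤ := if 0 < (c : ℕ) ∧ L - (c : ℕ) ≤ j0 then ((j : ℕ) : ℤ) - 1
    else ((j : ℕ) : ℤ) with hKdef
  set p : ℤ := ((c : ℕ) : ℤ) + K * L + j0 with hpdef
  have hnz : (n : ℤ) = (M : ℤ) * (L : ℤ) := by push_cast [hn]; ring
  have hprodhi : K * (L : ℤ) ≤ ((M : ℤ) - 1) * L :=
    mul_le_mul_of_nonneg_right (by unfold K; split <;> omega) (by positivity)
  have hprodlo : (-1 : ℤ) * L ≤ K * L :=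
    mul_le_mul_of_nonneg_right (by unfold K; split <;> omega) (by positivity)
  have hexphi : ((M : ℤ) - 1) * L = (M : ℤ) * L - L := by ring
  have hp0 : 0 ≤ p := by
    unfold p
    by_cases hcase : 0 < (c : ℕ) ∧ L - (c : ℕ) ≤ j0
    · have hKj : K = ((j : ℕ) : ℤ) - 1 := by unfold K; rw [if_pos hcase]
      have : (0 : ℤ) * L ≤ K * L ∨ True := Or.inr trivial
      by_cases hj0case : (j : ℕ) = 0
      · have hKm1 : K = -1 := by omega
        rw [hKm1]; omega
      · have hK0 : 0 ≤ K := by omega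
        have := mul_nonneg hK0 (by positivity : (0:ℤ) ≤ L)
        omega
    · have hKj : K = ((j : ℕ) : ℤ) := by unfold K; rw [if_neg hcase]
      have hK0 : 0 ≤ K := by omega
      have := mul_nonneg hK0 (by positivity : (0:ℤ) ≤ L)
      omega
  have hpn : p < n := by
    unfold p
    by_cases hcase : 0 < (c : ℕ) ∧ L - (c : ℕ) ≤ j0
    · have hKj : K = ((j : ℕ) : ℤ) - 1 := by unfold K; rw [if_pos hcase]
      have hprodhi2 : K * (L : ℤ) ≤ ((M : ℤ) - 2) * L :=
        mul_le_mul_of_nonneg_right (by omega) (by positivity)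
      have hexphi2 : ((M : ℤ) - 2) * L = (M : ℤ) * L - 2 * L := by ring
      omega
    · have hKj : K = ((j : ℕ) : ℤ) := by unfold K; rw [if_neg hcase]
      have hcj0 : (c : ℕ) + j0 < L := by omega
      omega
  have hzp := hzdec.2.2.2 K j0 hj0L
  have hzp' := hzdec'.2.2.2 K j0 hj0L
  dsimp only at hag hzp hzp'
  rw [gLow_eval c b j hKdef] at hzp
  rw [gLow_eval c b' j hKdef] at hzp'
  have hagp := hag p hp0 (by omega)
  rw [hpdef] at hagp
  rw [hzp, hzp'] at hagp
  cases hbj : b j <;> cases hbj' : b' j <;>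
    rw [hbj, hbj'] at hagp hne <;> simp at hagp hne
  · refine hj0 ?_
    rw [List.getD_eq_getElem?_getD, List.getD_eq_getElem?_getD]
    exact hagp.symm
  · refine hj0 ?_
    rw [List.getD_eq_getElem?_getD, List.getD_eq_getElem?_getD]
    exact hagp

end Lower
section Final
variable {s t : List Bool} {L : ℕ}

lemma complexity_lower (hL : 1 ≤ L) (hs : s.length = L) (ht : t.length = L)
    (hst : s ≠ t) {v : List Bool} {d : ℕ} (hv : v.length ≤ L) (hd : d + v.length ≤ 2 * L)
    (hocc : ∀ p q : List Bool, (p = s ∨ p = t) → (q = s ∨ q = t) →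
      occursAt v (p ++ q) d ∧ ∀ i : ℕ, occursAt v (p ++ q) i → i = d)
    {n M : ℕ} (hM : 2 ≤ M) (hn : n = M * L) :
    L * 2 ^ M ≤ complexity {z | ∃ c β, IsDecomp s t L z c β} n := by
  classical
  obtain ⟨j0, hj0L, hj0⟩ := neq_index hs ht hst
  have hfin : (lang {z | ∃ c β, IsDecomp s t L z c β} n).Finite :=
    Set.Finite.subset (Finset.finite_toSet _) (lang_subset_upper hL hn)
  have hsubL : ↑(Finset.image (Phi s t L j0 M n) Finset.univ)
      ⊆ lang {z | ∃ c β, IsDecomp s t L z c β} n := by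
    intro w hw
    rw [Finset.mem_coe, Finset.mem_image] at hw
    obtain ⟨p, -, rfl⟩ := hw
    unfold Phi
    refine ofFn_mem_lang (Y := {z | ∃ c β, IsDecomp s t L z c β})
      (z := Zfun s t L ((p.1 : ℕ) : ℤ) (gLow L j0 M p.1 p.2)) ?_ n
    exact ⟨_, _, Zfun_isDecomp _ (by positivity) (by exact_mod_cast p.1.isLt) _⟩
  have hcard : (Finset.image (Phi s t L j0 M n) Finset.univ).card = L * 2 ^ M := by
    rw [Finset.card_image_of_injective _
      (Phi_inj hL hs ht hv hd hocc hj0L hj0 hM hn), Finset.card_univ]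
    simp [Fintype.card_fun]
  rw [complexity, ← hcard, ← Set.ncard_coe_finset]
  exact Set.ncard_le_ncard hsubL hfin

end Final

/-- Under the unique-decipherability hypotheses on `s` and `t`, the set `Y` of all
bi-infinite concatenations of `s` and `t` is a subshift whose complexity satisfies
`L·2^{n/L} ≤ P_Y(n) ≤ 4L·2^{n/L}` whenever `n` is a positive multiple of `2L`. -/
theorem concatenation_shift_complexity
    (L : ℕ) (hL : 1 ≤ L) (s t : List Bool)
    (hs : s.length = L) (ht : t.length = L) (hst : s ≠ t)
    (v : List Bool) (d : ℕ) (hv : v.length ≤ L) (hd : d + v.length ≤ 2 * L)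
    (hocc : ∀ p q : List Bool, (p = s ∨ p = t) → (q = s ∨ q = t) →
      occursAt v (p ++ q) d ∧ ∀ i : ℕ, occursAt v (p ++ q) i → i = d) :
    IsSubshift {z | ∃ c β, IsDecomp s t L z c β} ∧
    ∀ n : ℕ, 0 < n → 2 * L ∣ n →
      L * 2 ^ (n / L) ≤ complexity {z | ∃ c β, IsDecomp s t L z c β} n ∧
      complexity {z | ∃ c β, IsDecomp s t L z c β} n ≤ 4 * L * 2 ^ (n / L) := by
  constructor
  · exact Y_subshift hL
  · intro n hn0 hdvd
    have hLd : L ∣ n := dvd_trans (dvd_mul_left L 2) hdvd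
    obtain ⟨q, hq⟩ := hdvd
    have hq1 : 1 ≤ q := by
      rcases Nat.eq_zero_or_pos q with h | h
      · subst h; omega
      · exact h
    set M := n / L with hMdef
    have hnM : n = M * L := (Nat.div_mul_cancel hLd).symm
    have hMq : M = 2 * q := by
      rw [hMdef, hq, show 2 * L * q = (2 * q) * L by ring]
      exact Nat.mul_div_cancel _ (by omega)
    have hM2 : 2 ≤ M := by omega
    refine ⟨complexity_lower hL hs ht hst hv hd hocc hM2 hnM, ?_⟩
    have hup := complexity_upper (s := s) (t := t) hL hnM
    have h2 : 4 * L * 2 ^ M = 4 * (L * 2 ^ M) := by ring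
    rw [h2]
    calc complexity {z | ∃ c β, IsDecomp s t L z c β} n
        ≤ L * 2 ^ (M + 1) := hup
      _ = 2 * (L * 2 ^ M) := by ring
      _ ≤ 4 * (L * 2 ^ M) := Nat.mul_le_mul_right _ (by norm_num)
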